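/- Existence of the Bevan point: Let A, B, C be affinely independent points in the Euclidean plane, set a = dist B C, b = dist C A, c = dist A B and p = (a + b + c)/2. Let A₁ be the point strictly between B and C with dist B A₁ = p − c, let B₁ be the point strictly between C and A with dist C B₁ = p − a, and let C₁ be the point strictly between A and B with dist A C₁ = p − b (the vertices of the cotangent triangle). Then there exists a point V such that V − A₁ is orthogonal to C − B, V − B₁ is orthogonal to A − C, and V − C₁ is orthogonal to B − A; that is, the perpendiculars to the sides of triangle ABC erected at the vertices of the cotangent triangle are concurrent. -/

import Mathlib

open RealInnerProductSpace

private lemma seg_rep {P Q R : EuclideanSpace ℝ (Fin 2)} {d : ℝ} (h : Sbtw ℝ P R Q)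
    (hd : dist P R = d) : ∃ t : ℝ, R = t • (Q - P) + P ∧ t * dist P Q = d := by
  obtain ⟨t, ht, rfl⟩ := h.wbtw
  refine ⟨t, ?_, ?_⟩
  · simp [AffineMap.lineMap_apply]
  · rw [← hd, dist_left_lineMap, Real.norm_eq_abs, abs_of_nonneg ht.1]

/-- **Existence of the Bevan point.** If `A₁`, `B₁`, `C₁` are the vertices of the cotangent
triangle of triangle `ABC` (so `dist B A₁ = p − c`, `dist C B₁ = p − a`,
`dist A C₁ = p − b`), then the perpendiculars to the sides `BC`, `CA`, `AB` erected at
`A₁`, `B₁`, `C₁` are concurrent. -/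
theorem bevan_point (A B C A₁ B₁ C₁ : EuclideanSpace ℝ (Fin 2)) (a b c p : ℝ)
    (hABC : AffineIndependent ℝ ![A, B, C])
    (ha : a = dist B C) (hb : b = dist C A) (hc : c = dist A B) (hp : p = (a + b + c) / 2)
    (hA₁ : Sbtw ℝ B A₁ C) (hA₁d : dist B A₁ = p - c)
    (hB₁ : Sbtw ℝ C B₁ A) (hB₁d : dist C B₁ = p - a)
    (hC₁ : Sbtw ℝ A C₁ B) (hC₁d : dist A C₁ = p - b) :
    ∃ V : EuclideanSpace ℝ (Fin 2),
        ⟪V - A₁, C - B⟫ = 0 ∧ ⟪V - B₁, A - C⟫ = 0 ∧ ⟪V - C₁, B - A⟫ = 0 := by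
  obtain ⟨t₁, hA₁e, hA₁t⟩ := seg_rep hA₁ hA₁d
  obtain ⟨t₂, hB₁e, hB₁t⟩ := seg_rep hB₁ hB₁d
  obtain ⟨t₃, hC₁e, hC₁t⟩ := seg_rep hC₁ hC₁d
  rw [← ha] at hA₁t
  rw [← hb] at hB₁t
  rw [← hc] at hC₁t
  set u : EuclideanSpace ℝ (Fin 2) := C - B with hu
  set v : EuclideanSpace ℝ (Fin 2) := A - C with hv
  have huu : ⟪u, u⟫ = a * a := by
    rw [real_inner_self_eq_norm_mul_norm, ← dist_eq_norm, dist_comm, ← ha]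
  have hvv : ⟪v, v⟫ = b * b := by
    rw [real_inner_self_eq_norm_mul_norm, ← dist_eq_norm, dist_comm, ← hb]
  have hww : ⟪B - A, B - A⟫ = c * c := by
    rw [real_inner_self_eq_norm_mul_norm, ← dist_eq_norm, dist_comm, ← hc]
  have hune : u ≠ 0 := by
    rw [hu, sub_ne_zero]
    exact fun h => hABC.injective.ne (by decide : (2 : Fin 3) ≠ 1) h
  have ha0 : a ≠ 0 := by
    intro h
    apply hune
    have h0 : ⟪u, u⟫ = (0 : ℝ) := by rw [huu, h, mul_zero]
    exact inner_self_eq_zero.mp h0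
  set J : ℝ := ⟪u, v⟫ with hJ
  set D : ℝ := a * a * (b * b) - J * J with hD
  have hd : D ≠ 0 := by
    intro hdz
    have hcol : ¬ Collinear ℝ ({A, B, C} : Set (EuclideanSpace ℝ (Fin 2))) :=
      affineIndependent_iff_not_collinear_set.mp hABC
    apply hcol
    have hr : v = (J / (a * a)) • u := by
      have expand : ⟪v - (J / (a * a)) • u, v - (J / (a * a)) • u⟫
          = ⟪v, v⟫ - 2 * (J / (a * a)) * J + (J / (a * a)) * (J / (a * a)) * ⟪u, u⟫ := by
        simp only [inner_sub_left, inner_sub_right, real_inner_smul_left,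
          real_inner_smul_right, real_inner_comm u v, ← hJ]
        ring
      have hz0 : ⟪v - (J / (a * a)) • u, v - (J / (a * a)) • u⟫ = 0 := by
        rw [expand, huu, hvv]
        have hJJ : J * J = a * a * (b * b) := by
          rw [hD] at hdz; linarith [hdz]
        field_simp
        linear_combination (-1 : ℝ) * hJJ
      rw [sub_eq_zero.mp (inner_self_eq_zero.mp hz0)]
    have hCmem : C ∈ ({A, B, C} : Set (EuclideanSpace ℝ (Fin 2))) := by simp
    rw [collinear_iff_of_mem hCmem]
    refine ⟨u, fun q hq => ?_⟩
    rcases hq with hq | hq | hq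
    · refine ⟨J / (a * a), ?_⟩
      rw [hq, vadd_eq_add, ← hr, hv]
      abel
    · refine ⟨-1, ?_⟩
      rw [hq, vadd_eq_add, hu, neg_smul, one_smul]
      abel
    · exact ⟨0, by rw [hq, vadd_eq_add, zero_smul, zero_add]⟩
  set α : ℝ := ⟪A₁, u⟫ with hα
  set β : ℝ := ⟪B₁, v⟫ with hβ
  set x : ℝ := (α * (b * b) - β * J) / D with hx
  set y : ℝ := (β * (a * a) - α * J) / D with hy
  set V : EuclideanSpace ℝ (Fin 2) := x • u + y • v with hV
  have hVu : ⟪V, u⟫ = α := by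
    rw [hV, inner_add_left, real_inner_smul_left, real_inner_smul_left,
      real_inner_comm u v, ← hJ, huu, hx, hy, div_mul_eq_mul_div, div_mul_eq_mul_div,
      ← add_div, div_eq_iff hd, hD]
    ring
  have hVv : ⟪V, v⟫ = β := by
    rw [hV, inner_add_left, real_inner_smul_left, real_inner_smul_left, hvv,
      ← hJ, hx, hy, div_mul_eq_mul_div, div_mul_eq_mul_div,
      ← add_div, div_eq_iff hd, hD]
    ring
  have hba : B - A = -(u + v) := by rw [hu, hv]; abel
  have key : α + β + ⟪C₁, B - A⟫ = 0 := by
    have e1 : α = t₁ * ⟪u, u⟫ + ⟪B, u⟫ := by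
      rw [hα, hA₁e, inner_add_left, real_inner_smul_left]
    have e2 : β = t₂ * ⟪v, v⟫ + ⟪C, v⟫ := by
      rw [hβ, hB₁e, inner_add_left, real_inner_smul_left]
    have e3 : ⟪C₁, B - A⟫ = t₃ * ⟪B - A, B - A⟫ + ⟪A, B - A⟫ := by
      rw [hC₁e, inner_add_left, real_inner_smul_left]
    have n1 : a * a = ⟪C, C⟫ - ⟪B, C⟫ - ⟪B, C⟫ + ⟪B, B⟫ := by
      rw [← huu, hu]
      simp only [inner_sub_left, inner_sub_right, real_inner_comm B C]
      ring
    have n2 : b * b = ⟪A, A⟫ - ⟪C, A⟫ - ⟪C, A⟫ + ⟪C, C⟫ := by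
      rw [← hvv, hv]
      simp only [inner_sub_left, inner_sub_right, real_inner_comm C A]
      ring
    have n3 : c * c = ⟪B, B⟫ - ⟪A, B⟫ - ⟪A, B⟫ + ⟪A, A⟫ := by
      rw [← hww]
      simp only [inner_sub_left, inner_sub_right, real_inner_comm A B]
      ring
    have s1 : ⟪B, u⟫ + ⟪C, v⟫ + ⟪A, B - A⟫ = -(a * a + b * b + c * c) / 2 := by
      rw [hu, hv]
      simp only [inner_sub_right]
      linarith [n1, n2, n3]
    linear_combination e1 + e2 + e3 + t₁ * huu + t₂ * hvv + t₃ * hww + s1 +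
      a * hA₁t + b * hB₁t + c * hC₁t + (a + b + c) * hp
  refine ⟨V, ?_, ?_, ?_⟩
  · rw [inner_sub_left, hVu, ← hα, sub_self]
  · rw [inner_sub_left, hVv, ← hβ, sub_self]
  · have hCk : ⟪C₁, B - A⟫ = -(⟪C₁, u⟫ + ⟪C₁, v⟫) := by
      rw [hba, inner_neg_right, inner_add_right]
    rw [inner_sub_left, hba, inner_neg_right, inner_neg_right, inner_add_right,
      inner_add_right, hVu, hVv]
    rw [hCk] at key
    linarith [key]
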